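/- For every positive integer n, sum_{r=0}^{n} (-1)^{n+r} C(n+r, 2r) B_{2r}(x)/(n+r) = 2 B*_{2n}(x-2) as polynomials in x. -/

import Mathlib

open Finset Polynomial

/-- The Zagier polynomials, evaluated at a real number. -/
noncomputable def zagierBstarPoly (n : ℕ) (x : ℝ) : ℝ :=
  ∑ r ∈ Finset.range (n + 1),
    ((n + r).choose (2 * r) : ℝ) * (Polynomial.aeval x (Polynomial.bernoulli r)) / (n + r)

/-- Lucas-type sequence: V m z = α^m + β^m with α+β = z, αβ = 1. -/
noncomputable def lucasV : ℕ → ℝ → ℝ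
  | 0, _ => 2
  | 1, z => z
  | (m+2), z => z * lucasV (m+1) z - lucasV m z

lemma lucasV_neg (m : ℕ) (z : ℝ) : lucasV m (-z) = (-1)^m * lucasV m z := by
  induction m using Nat.strong_induction_on with
  | _ m ih =>
    match m with
    | 0 => simp [lucasV]
    | 1 => simp [lucasV]
    | (m+2) =>
      rw [lucasV, lucasV, ih (m+1) (by omega), ih m (by omega)]
      ring

lemma lucasV_four (m : ℕ) (z : ℝ) :
    lucasV (m+4) z = (z^2 - 2) * lucasV (m+2) z - lucasV m z := by
  have h1 : lucasV (m+4) z = z * lucasV (m+3) z - lucasV (m+2) z := rfl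
  have h2 : lucasV (m+3) z = z * lucasV (m+2) z - lucasV (m+1) z := rfl
  have h3 : lucasV (m+2) z = z * lucasV (m+1) z - lucasV m z := rfl
  rw [h1, h2]; nlinarith [h3]

lemma lucasV_two_mul (n : ℕ) (y : ℝ) : lucasV (2*n) y = lucasV n (y^2 - 2) := by
  induction n using Nat.strong_induction_on with
  | _ n ih =>
    match n with
    | 0 => rfl
    | 1 => show lucasV 2 y = y^2 - 2; show y * lucasV 1 y - lucasV 0 y = _; simp [lucasV]; ring
    | (n+2) =>
      have : 2*(n+2) = 2*n + 4 := by ring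
      rw [this, lucasV_four, show (2:ℕ)*n+2 = 2*(n+1) by ring, ih (n+1) (by omega), ih n (by omega)]
      rfl

def cc (m r : ℕ) : ℕ := (m+r).choose (2*r) + (m+r-1).choose (2*r)

lemma cc_zero (m : ℕ) (hm : 0 < m) : cc m 0 = 2 := by
  unfold cc
  rcases m with _ | m
  · omega
  · simp

lemma cc_vanish (m r : ℕ) (h : m < r) : cc m r = 0 := by
  unfold cc
  rw [Nat.choose_eq_zero_of_lt (by omega), Nat.choose_eq_zero_of_lt (by omega)]

lemma pascal4 (a s : ℕ) :
    (a+3).choose (s+2) + (a+2).choose (s+2) + ((a+1).choose (s+2) + a.choose (s+2)) =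
    2*((a+2).choose (s+2) + (a+1).choose (s+2)) + ((a+1).choose s + a.choose s) := by
  have h1 : (a+3).choose (s+2) = (a+2).choose (s+1) + (a+2).choose (s+2) :=
    Nat.choose_succ_succ' (a+2) (s+1)
  have h2 : (a+2).choose (s+1) = (a+1).choose s + (a+1).choose (s+1) :=
    Nat.choose_succ_succ' (a+1) s
  have h3 : (a+1).choose (s+1) = a.choose s + a.choose (s+1) :=
    Nat.choose_succ_succ' a s
  have h4 : (a+2).choose (s+2) = (a+1).choose (s+1) + (a+1).choose (s+2) :=
    Nat.choose_succ_succ' (a+1) (s+1)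
  have h5 : (a+1).choose (s+2) = a.choose (s+1) + a.choose (s+2) :=
    Nat.choose_succ_succ' a (s+1)
  omega

lemma cc_rec (m r : ℕ) (hm : 0 < m) :
    cc (m+2) (r+1) + cc m (r+1) = 2 * cc (m+1) (r+1) + cc (m+1) r := by
  obtain ⟨m, rfl⟩ : ∃ k, m = k + 1 := ⟨m - 1, by omega⟩
  show ((m+1)+2+(r+1)).choose (2*(r+1)) + ((m+1)+2+(r+1)-1).choose (2*(r+1))
      + (((m+1)+(r+1)).choose (2*(r+1)) + ((m+1)+(r+1)-1).choose (2*(r+1)))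
    = 2 * (((m+1)+1+(r+1)).choose (2*(r+1)) + ((m+1)+1+(r+1)-1).choose (2*(r+1)))
      + (((m+1)+1+r).choose (2*r) + ((m+1)+1+r-1).choose (2*r))
  have e1 : (m+1)+2+(r+1) = (m+r)+3+1 := by omega
  have e2 : (m+1)+2+(r+1)-1 = (m+r)+3 := by omega
  have e3 : (m+1)+(r+1) = (m+r)+1+1 := by omega
  have e4 : (m+1)+(r+1)-1 = (m+r)+1 := by omega
  have e5 : (m+1)+1+(r+1) = (m+r)+2+1 := by omega
  have e6 : (m+1)+1+(r+1)-1 = (m+r)+2 := by omega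
  have e7 : (m+1)+1+r = (m+r)+1+1 := by omega
  have e8 : (m+1)+1+r-1 = (m+r)+1 := by omega
  have e9 : 2*(r+1) = 2*r+2 := by omega
  rw [e2, e4, e6, e8, e1, e3, e5, e7, e9]
  set a := m + r with ha
  -- goal: C(a+4,2r+2)+C(a+3,2r+2) + (C(a+2,2r+2)+C(a+1,2r+2)) = 2*(C(a+3,2r+2)+C(a+2,2r+2)) + (C(a+2,2r)+C(a+1,2r))
  have := pascal4 (a+1) (2*r)
  have e10 : a+1+3 = a+3+1 := by omega
  have e11 : a+1+2 = a+3 := by omega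
  have e12 : a+1+1 = a+2 := by omega
  have g1 : a+2+1 = a+3 := by omega
  have g2 : a+1+1 = a+2 := by omega
  have g3 : a+3+1 = a+4 := by omega
  rw [e10, e11, e12] at this
  rw [g1, g2, g3] at this ⊢
  omega

lemma sum_cc_eq_lucasV (m : ℕ) (hm : 0 < m) (t : ℝ) :
    ∑ r ∈ range (m+1), (cc m r : ℝ) * t^r = lucasV m (t+2) := by
  induction m using Nat.strong_induction_on with
  | _ m ih =>
    match m with
    | 0 => omega
    | 1 =>
      have l1 : lucasV 1 (t+2) = t + 2 := rfl
      rw [l1]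
      norm_num [Finset.sum_range_succ, show cc 1 0 = 2 from rfl, show cc 1 1 = 1 from rfl]
      ring
    | 2 =>
      have l2 : lucasV 2 (t+2) = (t+2) * (t+2) - 2 := by
        show (t+2) * lucasV 1 (t+2) - lucasV 0 (t+2) = _
        norm_num [show lucasV 1 (t+2) = t+2 from rfl, show lucasV 0 (t+2) = 2 from rfl]
      rw [l2]
      norm_num [Finset.sum_range_succ, show cc 2 0 = 2 from rfl, show cc 2 1 = 4 from rfl,
        show cc 2 2 = 1 from rfl]
      ring
    | (m+3) =>
      have hrec : lucasV (m+3) (t+2) = (t+2) * lucasV (m+2) (t+2) - lucasV (m+1) (t+2) := rfl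
      rw [hrec, ← ih (m+2) (by omega) (by omega), ← ih (m+1) (by omega) (by omega)]
      have ext1 : ∑ r ∈ range (m+2), (cc (m+1) r : ℝ) * t^r
          = ∑ r ∈ range (m+5), (cc (m+1) r : ℝ) * t^r :=
        Finset.sum_subset (by apply Finset.range_subset_range.2; omega)
          (fun x _ hx => by
            rw [cc_vanish (m+1) x (by simp at hx; omega)]; simp)
      have ext2 : ∑ r ∈ range (m+3), (cc (m+2) r : ℝ) * t^r
          = ∑ r ∈ range (m+5), (cc (m+2) r : ℝ) * t^r :=
        Finset.sum_subset (by apply Finset.range_subset_range.2; omega)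
          (fun x _ hx => by
            rw [cc_vanish (m+2) x (by simp at hx; omega)]; simp)
      have ext3 : ∑ r ∈ range (m+4), (cc (m+3) r : ℝ) * t^r
          = ∑ r ∈ range (m+5), (cc (m+3) r : ℝ) * t^r :=
        Finset.sum_subset (by apply Finset.range_subset_range.2; omega)
          (fun x _ hx => by
            rw [cc_vanish (m+3) x (by simp at hx; omega)]; simp)
      rw [ext1, ext2, ext3]
      have shift : (∑ r ∈ range (m+5), (cc (m+2) r : ℝ) * t^r) * t
          = ∑ r ∈ range (m+5), (if r = 0 then (0:ℝ) else (cc (m+2) (r-1) : ℝ)) * t^r := by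
        rw [Finset.sum_range_succ'
          (fun r => (if r = 0 then (0:ℝ) else (cc (m+2) (r-1) : ℝ)) * t^r) (m+4)]
        simp only [Nat.add_sub_cancel, Nat.succ_ne_zero, if_neg, if_pos, reduceIte, zero_mul,
          add_zero]
        rw [Finset.sum_range_succ (fun r => (cc (m+2) r : ℝ) * t^r) (m+4),
          cc_vanish (m+2) (m+4) (by omega)]
        push_cast
        rw [zero_mul, add_zero, Finset.sum_mul]
        exact Finset.sum_congr rfl (fun x _ => by rw [pow_succ]; ring)
      have expand : (t+2) * ∑ r ∈ range (m+5), (cc (m+2) r : ℝ) * t^r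
          = (∑ r ∈ range (m+5), (cc (m+2) r : ℝ) * t^r) * t
            + 2 * ∑ r ∈ range (m+5), (cc (m+2) r : ℝ) * t^r := by ring
      rw [expand, shift, Finset.mul_sum, ← Finset.sum_add_distrib, ← Finset.sum_sub_distrib]
      apply Finset.sum_congr rfl
      intro r _
      rcases r with _ | r
      · norm_num [cc_zero (m+3) (by omega), cc_zero (m+2) (by omega), cc_zero (m+1) (by omega)]
      · have h := cc_rec (m+1) r (by omega)
        have h' : (cc (m+3) (r+1) : ℝ) + (cc (m+1) (r+1) : ℝ)
            = 2 * (cc (m+2) (r+1) : ℝ) + (cc (m+2) r : ℝ) := by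
          have : ((cc (m+1+2) (r+1) + cc (m+1) (r+1) : ℕ) : ℝ)
              = ((2 * cc (m+1+1) (r+1) + cc (m+1+1) r : ℕ) : ℝ) := by exact_mod_cast h
          push_cast at this
          convert this using 3 <;> omega
        simp only [Nat.add_sub_cancel, Nat.succ_ne_zero, if_neg, reduceIte]
        linear_combination h' * t^(r+1)

lemma bernoulli_aeval_add (k : ℕ) (x y : ℝ) :
    (aeval (x + y) (Polynomial.bernoulli k) : ℝ)
      = ∑ j ∈ range (k+1), (k.choose j : ℝ) * aeval x (Polynomial.bernoulli j) * y^(k-j) := by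
  have expand : ∀ (z : ℝ) (m : ℕ), (aeval z (Polynomial.bernoulli m) : ℝ)
      = ∑ i ∈ range (m+1), algebraMap ℚ ℝ (_root_.bernoulli (m-i) * m.choose i) * z^i := by
    intro z m
    rw [Polynomial.bernoulli_def, map_sum]
    exact Finset.sum_congr rfl (fun i _ => by rw [aeval_monomial])
  rw [expand]
  have lhs_eq : ∑ i ∈ range (k+1), algebraMap ℚ ℝ (_root_.bernoulli (k-i) * k.choose i) * (x+y)^i
      = ∑ i ∈ range (k+1), ∑ s ∈ range (i+1),
          algebraMap ℚ ℝ (_root_.bernoulli (k-i) * k.choose i)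
            * (x^s * y^(i-s) * (i.choose s : ℝ)) :=
    Finset.sum_congr rfl (fun i _ => by rw [add_pow, Finset.mul_sum])
  have rhs_eq : ∑ j ∈ range (k+1), (k.choose j : ℝ) * aeval x (Polynomial.bernoulli j) * y^(k-j)
      = ∑ j ∈ range (k+1), ∑ i ∈ range (j+1),
          (k.choose j : ℝ) * (algebraMap ℚ ℝ (_root_.bernoulli (j-i) * j.choose i) * x^i)
            * y^(k-j) :=
    Finset.sum_congr rfl (fun j _ => by rw [expand, Finset.mul_sum, Finset.sum_mul])
  rw [lhs_eq, rhs_eq, Finset.sum_sigma', Finset.sum_sigma']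
  refine Finset.sum_nbij' (fun p => ⟨k - p.1 + p.2, p.2⟩) (fun p => ⟨k - p.1 + p.2, p.2⟩)
    ?_ ?_ ?_ ?_ ?_
  · rintro ⟨i, s⟩ hm
    simp only [Finset.mem_sigma, Finset.mem_range] at hm ⊢
    omega
  · rintro ⟨j, i⟩ hm
    simp only [Finset.mem_sigma, Finset.mem_range] at hm ⊢
    omega
  · rintro ⟨i, s⟩ hm
    simp only [Finset.mem_sigma, Finset.mem_range] at hm
    simp only [Sigma.mk.inj_iff]
    constructor
    · omega
    · rfl
  · rintro ⟨j, i⟩ hm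
    simp only [Finset.mem_sigma, Finset.mem_range] at hm
    simp only [Sigma.mk.inj_iff]
    constructor
    · omega
    · rfl
  · rintro ⟨i, s⟩ hm
    simp only [Finset.mem_sigma, Finset.mem_range] at hm
    have hik : i ≤ k := by omega
    have hsi : s ≤ i := by omega
    -- goal: term equality
    have e1 : k - (k - i + s) = i - s := by omega
    have e2 : k - i + s - s = k - i := by omega
    have e3 : i - s ≤ i := by omega
    simp only [e1, e2]
    -- coefficient identity
    have hch : k.choose i * i.choose s = (k - i + s).choose s * k.choose (k - i + s) := by
      have h1 : k.choose i * i.choose s = k.choose s * (k - s).choose (i - s) :=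
        Nat.choose_mul hsi
      have h2 : k.choose (k - i + s) * (k - i + s).choose s
          = k.choose s * (k - s).choose (k - i + s - s) :=
        Nat.choose_mul (by omega)
      rw [e2] at h2
      have h3 : (k - s).choose (k - i) = (k - s).choose (i - s) := by
        rw [show k - i = (k - s) - (i - s) by omega]
        exact Nat.choose_symm (by omega)
      rw [h3] at h2
      calc k.choose i * i.choose s = k.choose s * (k - s).choose (i - s) := h1
        _ = k.choose (k - i + s) * (k - i + s).choose s := h2.symm
        _ = (k - i + s).choose s * k.choose (k - i + s) := mul_comm _ _
    have hch' : (k.choose i : ℝ) * i.choose s = (k - i + s).choose s * k.choose (k - i + s) := by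
      exact_mod_cast hch
    simp only [map_mul, map_natCast]
    linear_combination (algebraMap ℚ ℝ (_root_.bernoulli (k - i)) * x^s * y^(i-s)) * hch'

/-- Umbral functional: sends `X^m` to `B_m(x)`. -/
noncomputable def UL (x : ℝ) : ℝ[X] →+ ℝ :=
  (Finsupp.liftAddHom (fun m => AddMonoidHom.mulRight (aeval x (Polynomial.bernoulli m)))).comp
    ((AddMonoidAlgebra.coeffAddEquiv : AddMonoidAlgebra ℝ ℕ ≃+ (ℕ →₀ ℝ)).toAddMonoidHom.comp
      ((Polynomial.toFinsuppIso ℝ) : ℝ[X] →+* AddMonoidAlgebra ℝ ℕ).toAddMonoidHom)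

lemma UL_monomial (x a : ℝ) (m : ℕ) :
    UL x (Polynomial.monomial m a) = a * aeval x (Polynomial.bernoulli m) := by
  show (Finsupp.liftAddHom _) ((Polynomial.toFinsuppIso ℝ) (Polynomial.monomial m a)).coeff = _
  rw [Polynomial.toFinsuppIso_apply, Polynomial.toFinsupp_monomial]
  show (Finsupp.liftAddHom _) (Finsupp.single m a) = _
  rw [Finsupp.liftAddHom_apply_single]
  rfl


lemma UL_C_mul_X_pow (x a : ℝ) (m : ℕ) :
    UL x (C a * X^m) = a * aeval x (Polynomial.bernoulli m) := by
  rw [Polynomial.C_mul_X_pow_eq_monomial, UL_monomial]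

lemma UL_C_mul_sub_pow (x a : ℝ) (k : ℕ) :
    UL x (C a * (X - C 2)^k) = a * aeval (x - 2) (Polynomial.bernoulli k) := by
  have hexp : C a * (X - C (2:ℝ))^k
      = ∑ j ∈ range (k+1), C (a * (-2)^(k-j) * (k.choose j : ℝ)) * X^j := by
    rw [sub_eq_add_neg, ← C_neg, add_pow, Finset.mul_sum]
    refine Finset.sum_congr rfl (fun j _ => ?_)
    rw [← C_pow, ← Polynomial.C_eq_natCast, C_mul, C_mul]
    ring
  rw [hexp, map_sum]
  have : ∀ j ∈ range (k+1), UL x (C (a * (-2)^(k-j) * (k.choose j : ℝ)) * X^j)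
      = a * ((k.choose j : ℝ) * aeval x (Polynomial.bernoulli j) * (-2)^(k-j)) := by
    intro j _
    rw [UL_C_mul_X_pow]; ring
  rw [Finset.sum_congr rfl this, ← Finset.mul_sum, ← bernoulli_aeval_add]
  rw [show x + (-2:ℝ) = x - 2 by ring]


lemma poly_id (n : ℕ) (hn : 0 < n) :
    (∑ r ∈ range (n+1), C ((-1:ℝ)^(n+r) * (cc n r : ℝ)) * X^(2*r))
      = ∑ k ∈ range (2*n+1), C ((cc (2*n) k : ℝ)) * (X - C 2)^k := by
  apply Polynomial.funext
  intro y
  rw [Polynomial.eval_finset_sum, Polynomial.eval_finset_sum]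
  have lhs_eq : ∑ r ∈ range (n+1), (C ((-1:ℝ)^(n+r) * (cc n r : ℝ)) * X^(2*r)).eval y
      = (-1:ℝ)^n * ∑ r ∈ range (n+1), (cc n r : ℝ) * (-(y^2))^r := by
    rw [Finset.mul_sum]
    refine Finset.sum_congr rfl (fun r _ => ?_)
    simp only [Polynomial.eval_mul, Polynomial.eval_C, Polynomial.eval_pow, Polynomial.eval_X]
    rw [pow_add, neg_pow (y^2), pow_mul]
    ring
  have rhs_eq : ∑ k ∈ range (2*n+1), (C ((cc (2*n) k : ℝ)) * (X - C 2)^k).eval y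
      = ∑ k ∈ range (2*n+1), (cc (2*n) k : ℝ) * (y-2)^k := by
    refine Finset.sum_congr rfl (fun k _ => ?_)
    simp
  rw [lhs_eq, rhs_eq, sum_cc_eq_lucasV n hn, sum_cc_eq_lucasV (2*n) (by omega),
    show -(y^2) + 2 = -(y^2 - 2) by ring, lucasV_neg, show y - 2 + 2 = y by ring,
    lucasV_two_mul]
  rw [← mul_assoc, ← mul_pow]
  norm_num

lemma umbral_id (n : ℕ) (hn : 0 < n) (x : ℝ) :
    ∑ r ∈ range (n+1), (-1:ℝ)^(n+r) * (cc n r : ℝ) * aeval x (Polynomial.bernoulli (2*r))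
      = ∑ k ∈ range (2*n+1), (cc (2*n) k : ℝ) * aeval (x - 2) (Polynomial.bernoulli k) := by
  have h := congrArg (UL x) (poly_id n hn)
  rw [map_sum, map_sum] at h
  calc ∑ r ∈ range (n+1), (-1:ℝ)^(n+r) * (cc n r : ℝ) * aeval x (Polynomial.bernoulli (2*r))
      = ∑ r ∈ range (n+1), UL x (C ((-1:ℝ)^(n+r) * (cc n r : ℝ)) * X^(2*r)) := by
        refine Finset.sum_congr rfl (fun r _ => ?_)
        rw [UL_C_mul_X_pow]
    _ = ∑ k ∈ range (2*n+1), UL x (C ((cc (2*n) k : ℝ)) * (X - C 2)^k) := h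
    _ = ∑ k ∈ range (2*n+1), (cc (2*n) k : ℝ) * aeval (x - 2) (Polynomial.bernoulli k) := by
        refine Finset.sum_congr rfl (fun k _ => ?_)
        rw [UL_C_mul_sub_pow]

lemma cc_mul (m r : ℕ) (hm : 0 < m) :
    (m+r) * cc m r = 2*m * (m+r).choose (2*r) := by
  rcases le_or_gt r m with hr | hr
  · have h := Nat.choose_mul_succ_eq (m+r-1) (2*r)
    rw [show m+r-1+1 = m+r by omega] at h
    have e2 : m+r-2*r = m-r := by omega
    rw [e2] at h
    unfold cc
    zify [show r ≤ m from hr] at h ⊢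
    linear_combination h
  · rw [cc_vanish m r hr, Nat.choose_eq_zero_of_lt (by omega)]
    ring


theorem zagier_alternating_sum_eq (n : ℕ) (hn : 0 < n) (x : ℝ) :
    ∑ r ∈ Finset.range (n + 1), (-1 : ℝ) ^ (n + r) * ((n + r).choose (2 * r) : ℝ) *
        (Polynomial.aeval x (Polynomial.bernoulli (2 * r))) / (n + r)
      = 2 * zagierBstarPoly (2 * n) (x - 2) := by
  have hn' : (n : ℝ) ≠ 0 := Nat.cast_ne_zero.2 hn.ne'
  have lhs_eq : ∑ r ∈ Finset.range (n + 1), (-1 : ℝ) ^ (n + r) * ((n + r).choose (2 * r) : ℝ) *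
        (Polynomial.aeval x (Polynomial.bernoulli (2 * r))) / (n + r)
      = (∑ r ∈ range (n+1),
          (-1:ℝ)^(n+r) * (cc n r : ℝ) * aeval x (Polynomial.bernoulli (2*r))) / (2*n) := by
    rw [Finset.sum_div]
    refine Finset.sum_congr rfl (fun r _ => ?_)
    have h := cc_mul n r hn
    have h' : ((n:ℝ)+r) * (cc n r : ℝ) = 2*n * ((n+r).choose (2*r) : ℝ) := by
      exact_mod_cast h
    have hnr : ((n:ℝ)+r) ≠ 0 := by positivity
    field_simp
    linear_combination (-1 * aeval x (Polynomial.bernoulli (2*r))) * h'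
  have rhs_eq : 2 * zagierBstarPoly (2 * n) (x - 2)
      = (∑ k ∈ range (2*n+1),
          (cc (2*n) k : ℝ) * aeval (x - 2) (Polynomial.bernoulli k)) / (2*n) := by
    unfold zagierBstarPoly
    rw [Finset.mul_sum, Finset.sum_div]
    refine Finset.sum_congr rfl (fun k _ => ?_)
    have h := cc_mul (2*n) k (by omega)
    have h' : ((2*n:ℕ):ℝ) + k ≠ 0 := by positivity
    have h'' : (2*(n:ℝ)+k) * (cc (2*n) k : ℝ) = 2*(2*n) * ((2*n+k).choose (2*k) : ℝ) := by
      exact_mod_cast h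
    push_cast at h' ⊢
    field_simp
    linear_combination (-1 * aeval (x - 2) (Polynomial.bernoulli k)) * h''
  rw [lhs_eq, rhs_eq, umbral_id n hn x]
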